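/- (Rüssmann estimate, Fourier-coefficient form) Let ω ∈ ℝ^m be Diophantine with constants γ > 0, σ > 0. Let h(θ) = Σ_{l ≠ 0} ĥ(l) e^{2πi l·θ} be a trigonometric data with zero average whose Fourier coefficients satisfy |ĥ(l)| ≤ C e^{−2πρ|l|₁} for some C, ρ > 0. Define v̂(l) = ĥ(l)/(1 − e^{2πi l·ω}) for l ≠ 0 and v̂(0) = 0. Then for every 0 < δ < ρ, Σ_{l ≠ 0} |v̂(l)| e^{2π(ρ−δ)|l|₁} ≤ c₀ γ^{−1} δ^{−(σ+m)} C, where c₀ depends only on m and σ. In particular v(θ) = Σ v̂(l) e^{2πi l·θ} is a well-defined analytic solution of v(θ) − v(θ+ω) = h(θ) on a strip of width ρ − δ. -/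

import Mathlib

set_option maxHeartbeats 2000000
open scoped Real
open Real

section helpers

lemma helper_rpow_le {σ a x : ℝ} (hσ : 0 < σ) (ha : 0 < a) (hx : 0 < x) :
    x ^ σ ≤ (σ / a) ^ σ * Real.exp (a * x) := by
  have hsa : (0:ℝ) < σ / a := div_pos hσ ha
  rw [Real.rpow_def_of_pos hx, Real.rpow_def_of_pos hsa, ← Real.exp_add, Real.exp_le_exp]
  have h1 : Real.log (x / (σ / a)) ≤ x / (σ / a) - 1 :=
    Real.log_le_sub_one_of_pos (div_pos hx hsa)
  rw [Real.log_div (ne_of_gt hx) (ne_of_gt hsa)] at h1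
  have h2 : x / (σ / a) = a * x / σ := by field_simp
  rw [h2] at h1
  have h3 : σ * (Real.log x - Real.log (σ / a)) ≤ σ * (a * x / σ - 1) :=
    mul_le_mul_of_nonneg_left h1 hσ.le
  have h4 : σ * (a * x / σ) = a * x := by field_simp
  nlinarith


lemma helper_pow_sub_one {x : ℝ} (hx : 0 ≤ x) (m : ℕ) :
    (1 + x) ^ m - 1 ≤ m * x * (1 + x) ^ m := by
  induction m with
  | zero => simp
  | succ n ih =>
    have h1 : (0:ℝ) ≤ (1+x)^n := by positivity
    have h0 : (1 + x) ^ (n+1) - 1 = ((1+x)^n - 1) + x * (1+x)^n := by ring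
    rw [h0]
    have h3 : ((n:ℝ)+1) * x * (1+x)^n ≤ ((n:ℝ)+1) * x * (1+x)^(n+1) := by
      have : (1+x)^n ≤ (1+x)^(n+1) := pow_le_pow_right₀ (by linarith) (by omega)
      have hnn : (0:ℝ) ≤ ((n:ℝ)+1) * x := by positivity
      exact mul_le_mul_of_nonneg_left this hnn
    push_cast
    linarith


lemma helper_norm_one_sub_exp (x : ℝ) :
    4 * |x - round x| ≤ ‖1 - Complex.exp (2 * π * Complex.I * x)‖ := by
  have key : ‖1 - Complex.exp (2 * π * Complex.I * x)‖ = 2 * |Real.sin (π * x)| := by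
    have h1 : (2 * π * Complex.I * x) = ((2 * π * x : ℝ) : ℂ) * Complex.I := by
      push_cast; ring
    rw [h1, Complex.exp_mul_I, ← Complex.ofReal_cos, ← Complex.ofReal_sin]
    have h2 : (1 : ℂ) - (↑(Real.cos (2*π*x)) + ↑(Real.sin (2*π*x)) * Complex.I)
        = ((1 - Real.cos (2*π*x) : ℝ) : ℂ) + ((-Real.sin (2*π*x) : ℝ) : ℂ) * Complex.I := by
      push_cast; ring
    rw [h2, Complex.norm_add_mul_I]
    have h3 : Real.sin (π*x) ^ 2 = 1/2 - Real.cos (2*(π*x))/2 := Real.sin_sq_eq_half_sub _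
    have h4 : (1 - Real.cos (2*π*x))^2 + (-Real.sin (2*π*x))^2 = (2 * |Real.sin (π*x)|)^2 := by
      have h5 : Real.sin (2*π*x) ^ 2 + Real.cos (2*π*x) ^2 = 1 := Real.sin_sq_add_cos_sq _
      have h6 : |Real.sin (π*x)|^2 = Real.sin (π*x)^2 := sq_abs _
      have h7 : 2*(π*x) = 2*π*x := by ring
      rw [h7] at h3
      nlinarith
    rw [h4]
    exact Real.sqrt_sq (by positivity)
  rw [key]
  set p : ℤ := round x with hp
  have hy : |x - p| ≤ 1/2 := abs_sub_round x
  have hpi := Real.pi_pos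
  have hsin : |Real.sin (π * x)| = |Real.sin (π * (x - p))| := by
    have h : π * x = π * (x - p) + p * π := by ring
    rw [h, Real.sin_add_int_mul_pi, abs_mul]
    have h9 : |((-1:ℝ))^p| = 1 := by
      rcases Int.even_or_odd p with he | he
      · rw [he.neg_one_zpow, abs_one]
      · rw [he.neg_one_zpow, abs_neg, abs_one]
    rw [h9, one_mul]
  rw [hsin]
  have h8 : 2 * |x - (p:ℝ)| ≤ |Real.sin (π * (x - p))| := by
    set y := x - (p:ℝ) with hy'
    have habs : |Real.sin (π * y)| = Real.sin (π * |y|) := by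
      rcases le_or_gt 0 y with h | h
      · rw [abs_of_nonneg h, abs_of_nonneg]
        exact Real.sin_nonneg_of_nonneg_of_le_pi (by positivity) (by nlinarith [abs_of_nonneg h, hy])
      · rw [abs_of_neg h, mul_neg, Real.sin_neg, abs_of_nonpos]
        exact Real.sin_nonpos_of_nonpos_of_neg_pi_le (by nlinarith) (by nlinarith [abs_of_neg h, hy])
    rw [habs]
    have hle := Real.mul_le_sin (x := π * |y|) (by positivity)
      (by nlinarith [abs_nonneg y, hy])
    calc 2 * |y| = 2/π * (π * |y|) := by field_simp
    _ ≤ Real.sin (π * |y|) := hle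
  linarith


lemma helper_natAbs_geom {r : ℝ} (hr0 : 0 ≤ r) (hr1 : r < 1) :
    HasSum (fun k : ℤ => r ^ k.natAbs) ((1 - r)⁻¹ + r * (1 - r)⁻¹) := by
  have H1 : HasSum (fun n : ℕ => r ^ ((n : ℤ)).natAbs) (1-r)⁻¹ := by
    have e1 : (fun n : ℕ => r ^ ((n : ℤ)).natAbs) = fun n : ℕ => r ^ n := by
      funext n; simp
    rw [e1]; exact hasSum_geometric_of_lt_one hr0 hr1
  have H2 : HasSum (fun n : ℕ => r ^ ((-((n : ℤ)+1))).natAbs) (r * (1-r)⁻¹) := by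
    have e2 : (fun n : ℕ => r ^ ((-((n : ℤ)+1))).natAbs) = fun n : ℕ => r * r ^ n := by
      funext n
      have hna : (-((n:ℤ)+1)).natAbs = n+1 := by omega
      rw [hna, pow_succ]; ring
    rw [e2]; exact (hasSum_geometric_of_lt_one hr0 hr1).mul_left r
  exact HasSum.of_nat_of_neg_add_one (f := fun k : ℤ => r ^ k.natAbs) H1 H2


lemma helper_int_geom {t : ℝ} (ht : 0 < t) :
    HasSum (fun k : ℤ => Real.exp (-t * |(k:ℝ)|))
      ((1 - Real.exp (-t))⁻¹ + Real.exp (-t) * (1 - Real.exp (-t))⁻¹) := by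
  have hkey : (fun k : ℤ => Real.exp (-t * |(k:ℝ)|))
      = fun k : ℤ => (Real.exp (-t)) ^ k.natAbs := by
    funext k
    rw [← Real.exp_nat_mul]
    congr 1
    rw [Nat.cast_natAbs]
    push_cast
    ring
  rw [hkey]
  exact helper_natAbs_geom (Real.exp_pos _).le (Real.exp_lt_one_iff.mpr (by linarith))





lemma helper_int_geom_bound {t : ℝ} (ht : 0 < t) :
    (1 - Real.exp (-t))⁻¹ + Real.exp (-t) * (1 - Real.exp (-t))⁻¹
      ≤ 1 + 2 / (Real.exp t - 1) := by
  set r : ℝ := Real.exp (-t) with hr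
  have hr0 : 0 < r := Real.exp_pos _
  have hr1 : r < 1 := Real.exp_lt_one_iff.mpr (by linarith)
  have het : 0 < Real.exp t - 1 := by
    nlinarith [Real.add_one_le_exp t]
  have hprod : r * Real.exp t = 1 := by
    rw [hr, ← Real.exp_add]; simp
  have hrr : (0:ℝ) < 1 - r := by linarith
  have hconv : r / (1 - r) = 1 / (Real.exp t - 1) := by
    rw [div_eq_div_iff hrr.ne' het.ne']; nlinarith
  have h5 : (1 - r)⁻¹ + r * (1-r)⁻¹ = 1 + 2 * (r / (1 - r)) := by
    field_simp; ring
  rw [h5, hconv]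
  rw [mul_one_div]

lemma helper_pi_hasSum {t : ℝ} {S : ℝ}
    (hS : HasSum (fun k : ℤ => Real.exp (-t * |(k:ℝ)|)) S) :
    ∀ m : ℕ, HasSum (fun l : Fin m → ℤ => Real.exp (-t * ∑ j, |((l j : ℤ):ℝ)|)) (S ^ m) := by
  intro m
  induction m with
  | zero =>
    have h0 : ∀ l : Fin 0 → ℤ, Real.exp (-t * ∑ j, |((l j : ℤ):ℝ)|) = 1 := by
      intro l; simp
    have := hasSum_single (f := fun l : Fin 0 → ℤ => Real.exp (-t * ∑ j, |((l j : ℤ):ℝ)|))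
      (default) (fun b' hb' => absurd (Subsingleton.elim b' default) hb')
    simpa [h0] using this
  | succ m ih =>
    rw [pow_succ, mul_comm]
    set F : (Fin (m+1) → ℤ) → ℝ := fun l => Real.exp (-t * ∑ j, |((l j : ℤ):ℝ)|) with hF
    have e := Fin.consEquiv (fun _ : Fin (m+1) => ℤ)
    apply (Equiv.hasSum_iff (Fin.consEquiv (fun _ : Fin (m+1) => ℤ))).mp
    have hcomp : (F ∘ (Fin.consEquiv (fun _ : Fin (m+1) => ℤ)))
        = fun p : ℤ × (Fin m → ℤ) =>
            Real.exp (-t * |(p.1:ℝ)|) * Real.exp (-t * ∑ j, |((p.2 j : ℤ):ℝ)|) := by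
      funext p
      show F (Fin.cons p.1 p.2) = _
      rw [hF]
      simp only [Fin.sum_univ_succ, Fin.cons_zero, Fin.cons_succ]
      rw [← Real.exp_add]
      congr 1
      ring
    rw [hcomp]
    have hnf : Summable fun k : ℤ => ‖Real.exp (-t * |(k:ℝ)|)‖ := by
      simpa only [Real.norm_eq_abs] using hS.summable.abs
    have hng : Summable fun l : Fin m → ℤ => ‖Real.exp (-t * ∑ j, |((l j : ℤ):ℝ)|)‖ := by
      simpa only [Real.norm_eq_abs] using ih.summable.abs
    exact hS.mul ih (summable_mul_of_summable_norm hnf hng)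


lemma helper_count (m : ℕ) {t : ℝ} (ht : 0 < t) :
    (1 + 2 / (Real.exp t - 1)) ^ m - 1
      ≤ (4^m + 4*m*(m.factorial)*3^m) / t ^ m := by
  have htm : (0:ℝ) < t ^ m := by positivity
  have het : 0 < Real.exp t - 1 := by nlinarith [Real.add_one_le_exp t]
  set x : ℝ := 2 / (Real.exp t - 1) with hx
  have hx0 : 0 ≤ x := by positivity
  have hx2 : x ≤ 2 / t := by
    apply div_le_div_of_nonneg_left (by norm_num) ht
    nlinarith [Real.add_one_le_exp t]
  rcases le_or_gt t 1 with h1 | h1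
  · have h2 : 1 + x ≤ 4 / t := by
      have : (1:ℝ) ≤ 2 / t := by
        rw [le_div_iff₀ ht]; linarith
      have h44 : (4:ℝ)/t = 2/t + 2/t := by ring
      linarith
    have h3 : (1 + x) ^ m ≤ (4 / t) ^ m :=
      pow_le_pow_left₀ (by linarith) h2 m
    have h4 : (4 / t : ℝ) ^ m = 4 ^ m / t ^ m := div_pow 4 t m
    have h5 : (0:ℝ) ≤ 4*m*(m.factorial)*3^m / t^m := by positivity
    have h6 : (4^m + 4*↑m*(↑m.factorial)*3^m : ℝ) / t ^ m
        = 4^m / t^m + 4*↑m*(↑m.factorial)*3^m / t^m := by ring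
    rw [h6]
    have := h3.trans_eq h4
    linarith
  · have he2 : (2:ℝ) ≤ Real.exp t := by
      have := Real.add_one_le_exp t
      linarith
    have hx3 : x ≤ 4 * Real.exp (-t) := by
      rw [hx, Real.exp_neg]
      rw [div_le_iff₀ het]
      have hep : 0 < Real.exp t := Real.exp_pos t
      rw [mul_comm (4 * (Real.exp t)⁻¹), ← mul_assoc]
      rw [mul_comm (Real.exp t - 1)]
      have : (Real.exp t)⁻¹ * Real.exp t = 1 := inv_mul_cancel₀ hep.ne'
      nlinarith [mul_pos hep hep]
    have hexp : Real.exp (-t) ≤ m.factorial / t ^ m := by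
      have hfac : (0:ℝ) < m.factorial := by positivity
      have h7 : t ^ m / (m.factorial : ℝ) ≤ Real.exp t :=
        Real.pow_div_factorial_le_exp (x := t) ht.le m
      rw [div_le_iff₀ hfac] at h7
      rw [Real.exp_neg, inv_eq_one_div, div_le_div_iff₀ (Real.exp_pos t) htm]
      nlinarith
    have h8 : 1 + x ≤ 3 := by
      have : x ≤ 2 := hx2.trans (by rw [div_le_iff₀ ht]; linarith)
      linarith
    have h9 := helper_pow_sub_one hx0 m
    have h10 : (m:ℝ) * x * (1+x)^m ≤ m * (4 * (m.factorial / t^m)) * 3^m := by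
      apply mul_le_mul
      · apply mul_le_mul_of_nonneg_left _ (Nat.cast_nonneg m)
        exact hx3.trans (by nlinarith [Real.exp_pos (-t)])
      · exact pow_le_pow_left₀ (by linarith) h8 m
      · positivity
      · positivity
    have h11 : (m:ℝ) * (4 * (↑m.factorial / t^m)) * 3^m
        = 4*↑m*(↑m.factorial)*3^m / t^m := by ring
    have h12 : (0:ℝ) ≤ 4^m / t^m := by positivity
    have h13 : (4^m + 4*↑m*(↑m.factorial)*3^m : ℝ) / t ^ m
        = 4^m / t^m + 4*↑m*(↑m.factorial)*3^m / t^m := by ring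
    rw [h13]
    rw [h11] at h10
    linarith


lemma helper_norm_exp_eq_one (x : ℝ) : ‖Complex.exp (2 * π * Complex.I * x)‖ = 1 := by
  have h1 : (2 * π * Complex.I * x) = ((2 * π * x : ℝ) : ℂ) * Complex.I := by
    push_cast; ring
  rw [h1, Complex.norm_exp_ofReal_mul_I]

end helpers

/-- Rüssmann estimate in Fourier-coefficient form.  For Diophantine `ω`, zero-average
data with exponentially decaying Fourier coefficients, the formal solution
`vhat(l) = hhat(l)/(1 − e^{2πi l·ω})` of the cohomological equation satisfies the weighted
`ℓ¹` bound `Σ_{l≠0} |vhat(l)| e^{2π(ρ−δ)|l|₁} ≤ c₀ γ⁻¹ δ^{−(σ+m)} C` with `c₀ = c₀(m,σ)`;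
in particular `v(θ) = Σ vhat(l) e^{2πi l·θ}` solves `v(θ) − v(θ+ω) = h(θ)`. -/
theorem russmann_estimate (m : ℕ) (σ : ℝ) (hσ : 0 < σ) :
    ∃ c₀ : ℝ, 0 < c₀ ∧
      ∀ (γ : ℝ), 0 < γ →
      ∀ (ω : Fin m → ℝ),
        (∀ l : Fin m → ℤ, l ≠ 0 → ∀ p : ℤ,
          γ * ((∑ j, |l j| : ℤ) : ℝ) ^ (-σ) ≤ |(∑ j, (l j : ℝ) * ω j) - p|) →
      ∀ (hhat vhat : (Fin m → ℤ) → ℂ) (C ρ : ℝ), 0 ≤ C → 0 < ρ →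
        hhat 0 = 0 →
        (∀ l : Fin m → ℤ, l ≠ 0 →
          ‖hhat l‖ ≤ C * Real.exp (-(2 * π * ρ) * ((∑ j, |l j| : ℤ) : ℝ))) →
        vhat 0 = 0 →
        (∀ l : Fin m → ℤ, l ≠ 0 →
          vhat l = hhat l /
            (1 - Complex.exp (2 * π * Complex.I * (∑ j, (l j : ℝ) * ω j)))) →
      ∀ δ : ℝ, 0 < δ → δ < ρ →
        (∑' l : Fin m → ℤ,
            ‖vhat l‖ * Real.exp (2 * π * (ρ - δ) * ((∑ j, |l j| : ℤ) : ℝ)))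
          ≤ c₀ * γ⁻¹ * δ ^ (-(σ + m)) * C ∧
        ∀ θ : Fin m → ℝ,
          (∑' l : Fin m → ℤ,
              vhat l * Complex.exp (2 * π * Complex.I * (∑ j, (l j : ℝ) * θ j)))
          - (∑' l : Fin m → ℤ,
              vhat l * Complex.exp (2 * π * Complex.I * (∑ j, (l j : ℝ) * (θ j + ω j))))
          = ∑' l : Fin m → ℤ,
              hhat l * Complex.exp (2 * π * Complex.I * (∑ j, (l j : ℝ) * θ j)) := by
  have hπ : (0:ℝ) < π := Real.pi_pos
  set A : ℝ := 4^m + 4*m*(m.factorial)*3^m with hA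
  have hApos : 0 < A := by positivity
  refine ⟨(σ/π)^σ * A / (4 * π^m), by positivity, ?_⟩
  intro γ hγ ω hdio hhat vhat C ρ hC hρ hh0 hhb hv0 hvf δ hδ hδρ
  -- notation
  set nl : (Fin m → ℤ) → ℝ := fun l => ((∑ j, |l j| : ℤ) : ℝ) with hnl
  have hncast : ∀ l : Fin m → ℤ, nl l = ∑ j, |((l j : ℤ):ℝ)| := by
    intro l; rw [hnl]; push_cast; rfl
  have hnnonneg : ∀ l, 0 ≤ nl l := by
    intro l; rw [hncast]; positivity
  have hnone : ∀ l : Fin m → ℤ, l ≠ 0 → 1 ≤ nl l := by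
    intro l hl
    obtain ⟨j, hj⟩ := Function.ne_iff.mp hl
    have h1 : (1:ℤ) ≤ |l j| := Int.one_le_abs (by simpa using hj)
    have h2 : |l j| ≤ ∑ i, |l i| :=
      Finset.single_le_sum (fun i _ => abs_nonneg (l i)) (Finset.mem_univ j)
    simp only [hnl]
    exact_mod_cast h1.trans h2
  -- small divisor bound
  have hsd : ∀ l : Fin m → ℤ, l ≠ 0 →
      4 * (γ * (nl l) ^ (-σ)) ≤
        ‖1 - Complex.exp (2 * π * Complex.I * (∑ j, (l j : ℝ) * ω j))‖ := by
    intro l hl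
    have h1 := helper_norm_one_sub_exp (∑ j, (l j : ℝ) * ω j)
    have h2 := hdio l hl (round (∑ j, (l j : ℝ) * ω j))
    calc 4 * (γ * (nl l) ^ (-σ))
        ≤ 4 * |(∑ j, (l j : ℝ) * ω j) - round (∑ j, (l j : ℝ) * ω j)| := by
          apply mul_le_mul_of_nonneg_left _ (by norm_num)
          exact h2
    _ ≤ _ := h1
  have hsdpos : ∀ l : Fin m → ℤ, l ≠ 0 →
      (0:ℝ) < 4 * (γ * (nl l) ^ (-σ)) := by
    intro l hl
    have := hnone l hl
    have : (0:ℝ) < nl l := by linarith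
    positivity
  -- coefficient bound
  have hvb : ∀ l : Fin m → ℤ, l ≠ 0 →
      ‖vhat l‖ ≤ C * Real.exp (-(2 * π * ρ) * nl l) / (4 * (γ * (nl l) ^ (-σ))) := by
    intro l hl
    rw [hvf l hl, norm_div]
    apply div_le_div₀ (by positivity) (hhb l hl) (hsdpos l hl) (hsd l hl)
  -- the weighted series
  set f : (Fin m → ℤ) → ℝ :=
    fun l => ‖vhat l‖ * Real.exp (2 * π * (ρ - δ) * nl l) with hf
  set t : ℝ := π * δ with ht
  have htpos : 0 < t := by positivity
  set g : (Fin m → ℤ) → ℝ := fun l => Real.exp (-t * ∑ j, |((l j : ℤ):ℝ)|) with hg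
  set S : ℝ := (1 - Real.exp (-t))⁻¹ + Real.exp (-t) * (1 - Real.exp (-t))⁻¹ with hS
  have hgsum : HasSum g (S ^ m) := helper_pi_hasSum (helper_int_geom htpos) m
  set K : ℝ := C / (4 * γ) * (σ / t) ^ σ with hK
  have hKpos : 0 ≤ K := by positivity
  -- pointwise bound f l ≤ K * g l for l ≠ 0
  have hfg : ∀ l : Fin m → ℤ, l ≠ 0 → f l ≤ K * g l := by
    intro l hl
    have hn1 := hnone l hl
    have hnpos : (0:ℝ) < nl l := by linarith
    have step1 : f l ≤ C / (4 * γ) * ((nl l) ^ σ * Real.exp (-(2*π*δ) * nl l)) := by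
      rw [hf]
      have h3 : ‖vhat l‖ * Real.exp (2 * π * (ρ - δ) * nl l)
          ≤ (C * Real.exp (-(2 * π * ρ) * nl l) / (4 * (γ * (nl l) ^ (-σ))))
             * Real.exp (2 * π * (ρ - δ) * nl l) :=
        mul_le_mul_of_nonneg_right (hvb l hl) (Real.exp_nonneg _)
      refine h3.trans (le_of_eq ?_)
      have h5 : (0:ℝ) < (nl l) ^ σ := Real.rpow_pos_of_pos hnpos σ
      have hexpc : Real.exp (-(2 * π * ρ) * nl l) * Real.exp (2 * π * (ρ - δ) * nl l)
          = Real.exp (-(2*π*δ) * nl l) := by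
        rw [← Real.exp_add]; congr 1; ring
      rw [Real.rpow_neg (le_of_lt hnpos), ← hexpc]
      field_simp
    have step2 : (nl l) ^ σ * Real.exp (-(2*π*δ) * nl l)
        ≤ (σ / t) ^ σ * Real.exp (-t * nl l) := by
      have h6 : (nl l) ^ σ ≤ (σ / t) ^ σ * Real.exp (t * nl l) :=
        helper_rpow_le hσ htpos hnpos
      have h7 : -(2*π*δ) * nl l = -t * nl l + -(t * nl l) := by rw [ht]; ring
      rw [h7, Real.exp_add, ← mul_assoc, mul_comm ((nl l) ^ σ)]
      calc Real.exp (-t * nl l) * (nl l) ^ σ * Real.exp (-(t * nl l))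
          ≤ Real.exp (-t * nl l) * ((σ / t) ^ σ * Real.exp (t * nl l)) * Real.exp (-(t * nl l)) := by
            apply mul_le_mul_of_nonneg_right _ (Real.exp_nonneg _)
            exact mul_le_mul_of_nonneg_left h6 (Real.exp_nonneg _)
      _ = (σ / t) ^ σ * Real.exp (-t * nl l) * (Real.exp (t * nl l) * Real.exp (-(t * nl l))) := by
            ring
      _ = (σ / t) ^ σ * Real.exp (-t * nl l) := by
            rw [← Real.exp_add]; simp
    have step3 : Real.exp (-t * nl l) = g l := by rw [hg, hncast]
    calc f l ≤ C / (4 * γ) * ((nl l) ^ σ * Real.exp (-(2*π*δ) * nl l)) := step1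
    _ ≤ C / (4 * γ) * ((σ / t) ^ σ * Real.exp (-t * nl l)) := by
        apply mul_le_mul_of_nonneg_left step2 (by positivity)
    _ = K * g l := by rw [hK, step3]; ring
  have hf0 : f 0 = 0 := by rw [hf]; simp [hv0]
  have hfnonneg : ∀ l, 0 ≤ f l := by
    intro l; rw [hf]; positivity
  have hgnonneg : ∀ l, 0 ≤ g l := fun l => Real.exp_nonneg _
  have hfle : ∀ l, f l ≤ K * g l := by
    intro l
    by_cases hl : l = 0
    · rw [hl, hf0]; exact mul_nonneg hKpos (hgnonneg 0)
    · exact hfg l hl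
  have hKg : Summable fun l => K * g l := hgsum.summable.mul_left K
  have hfsum : Summable f := Summable.of_nonneg_of_le hfnonneg hfle hKg
  constructor
  · -- the estimate
    set G : (Fin m → ℤ) → ℝ := fun l => if l = 0 then 0 else K * g l with hG
    have hGnonneg : ∀ l, 0 ≤ G l := by
      intro l; rw [hG]; dsimp only; split
      · exact le_rfl
      · exact mul_nonneg hKpos (hgnonneg l)
    have hGle : ∀ l, G l ≤ K * g l := by
      intro l; rw [hG]; dsimp only; split
      · exact mul_nonneg hKpos (hgnonneg l)
      · exact le_rfl
    have hGsum : Summable G := Summable.of_nonneg_of_le hGnonneg hGle hKg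
    have hfG : ∀ l, f l ≤ G l := by
      intro l; rw [hG]; dsimp only; split
      · rename_i h; rw [h, hf0]
      · exact hfg l (by assumption)
    have h8 : ∑' l, f l ≤ ∑' l, G l := Summable.tsum_le_tsum hfG hfsum hGsum
    have hg0 : g 0 = 1 := by rw [hg]; simp
    have h9 : ∑' l, g l = g 0 + ∑' l, (if l = 0 then 0 else g l) :=
      Summable.tsum_eq_add_tsum_ite hgsum.summable 0
    have h10 : ∑' l, G l = K * ∑' l, (if l = 0 then 0 else g l) := by
      rw [← tsum_mul_left]
      apply tsum_congr
      intro l; rw [hG]; dsimp only; split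
      · simp
      · rfl
    have h11 : ∑' l, (if l = 0 then 0 else g l) = S ^ m - 1 := by
      rw [hgsum.tsum_eq, hg0] at h9
      linarith
    have hSB : S ≤ 1 + 2 / (Real.exp t - 1) := helper_int_geom_bound htpos
    have hS0 : 0 ≤ S := by
      rw [hS]
      have h12 : Real.exp (-t) < 1 := Real.exp_lt_one_iff.mpr (by linarith)
      have h13 : 0 < 1 - Real.exp (-t) := by linarith
      positivity
    have h14 : S ^ m - 1 ≤ A / t ^ m :=
      le_trans (by nlinarith [pow_le_pow_left₀ hS0 hSB m]) (helper_count m htpos)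
    have h15 : ∑' l, f l ≤ K * (A / t ^ m) := by
      rw [h10, h11] at h8
      refine h8.trans ?_
      apply mul_le_mul_of_nonneg_left h14 hKpos
    refine h15.trans (le_of_eq ?_)
    -- algebra: K * (A / t^m) = c₀ γ⁻¹ δ^(-(σ+m)) C
    rw [hK, ht]
    have e1 : (σ / (π * δ)) ^ σ = (σ / π) ^ σ * (δ ^ σ)⁻¹ := by
      rw [div_mul_eq_div_div, Real.div_rpow (by positivity) (le_of_lt hδ),
        Real.div_rpow (le_of_lt hσ) (le_of_lt hπ)]
      ring
    have e2 : (δ:ℝ) ^ (-(σ + (m:ℝ))) = (δ ^ σ)⁻¹ * (δ ^ m)⁻¹ := by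
      rw [neg_add, Real.rpow_add hδ, Real.rpow_neg (le_of_lt hδ), Real.rpow_neg (le_of_lt hδ),
        Real.rpow_natCast]
    have e3 : (π * δ) ^ m = π ^ m * δ ^ m := mul_pow π δ m
    rw [e1, e2, e3]
    have hδσ : (0:ℝ) < δ ^ σ := Real.rpow_pos_of_pos hδ σ
    field_simp
  · -- the equation
    intro θ
    have hnorm1 : ∀ (φ : Fin m → ℝ) (l : Fin m → ℤ),
        ‖vhat l * Complex.exp (2 * π * Complex.I * (∑ j, (l j : ℝ) * φ j))‖ = ‖vhat l‖ := by
      intro φ l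
      rw [norm_mul, helper_norm_exp_eq_one, mul_one]
    have hvsum : Summable fun l => ‖vhat l‖ := by
      apply Summable.of_nonneg_of_le (fun l => norm_nonneg _) _ hfsum
      intro l
      rw [hf]
      nth_rewrite 1 [← mul_one ‖vhat l‖]
      apply mul_le_mul_of_nonneg_left _ (norm_nonneg _)
      rw [Real.one_le_exp_iff]
      have := hnnonneg l
      have : 0 ≤ ρ - δ := by linarith
      positivity
    have hs1 : Summable fun l => vhat l * Complex.exp (2 * π * Complex.I * (∑ j, (l j : ℝ) * θ j)) := by
      apply Summable.of_norm
      apply hvsum.congr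
      intro l; rw [hnorm1]
    have hs2 : Summable fun l =>
        vhat l * Complex.exp (2 * π * Complex.I * (∑ j, (l j : ℝ) * (θ j + ω j))) := by
      apply Summable.of_norm
      apply hvsum.congr
      intro l; rw [hnorm1]
    rw [← Summable.tsum_sub hs1 hs2]
    apply tsum_congr
    intro l
    by_cases hl : l = 0
    · rw [hl, hv0, hh0]; simp
    · have hsumsplit : (∑ j, (l j : ℝ) * (θ j + ω j))
          = (∑ j, (l j:ℝ) * θ j) + (∑ j, (l j:ℝ) * ω j) := by
        rw [← Finset.sum_add_distrib]
        apply Finset.sum_congr rfl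
        intros; ring
      have hEsplit : Complex.exp (2 * π * Complex.I * ((∑ j, (l j : ℝ) * (θ j + ω j) : ℝ) : ℂ))
          = Complex.exp (2 * π * Complex.I * ((∑ j, (l j:ℝ) * θ j : ℝ) : ℂ))
            * Complex.exp (2 * π * Complex.I * ((∑ j, (l j:ℝ) * ω j : ℝ) : ℂ)) := by
        rw [← Complex.exp_add, hsumsplit]
        push_cast
        ring_nf
      have hne : (1 : ℂ) - Complex.exp (2 * π * Complex.I
          * ((∑ j, (l j:ℝ) * ω j : ℝ) : ℂ)) ≠ 0 := by
        rw [← norm_pos_iff]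
        calc (0:ℝ) < 4 * (γ * (nl l) ^ (-σ)) := hsdpos l hl
        _ ≤ _ := hsd l hl
      rw [hvf l hl, hEsplit]
      push_cast at hne ⊢
      field_simp
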